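/- Let X be a real Banach space. The norm of the dual space X* is average non rough if and only if X has the Ball Small Combination of Slice Property (BSCSP). -/

import Mathlib

open Metric NormedSpace ENNReal

section Defs

variable (Z : Type*) [NormedAddCommGroup Z] [NormedSpace ℝ Z]

/-- The w*-slice of the closed unit ball of the dual of `Z` determined by `z : Z` and `α > 0`:
`S(B_{Z*}, z, α) = {f ∈ B_{Z*} : f(z) > sup_{g ∈ B_{Z*}} g(z) − α}`. -/
def wStarSlice (z : Z) (α : ℝ) : Set (StrongDual ℝ Z) :=
  {f | f ∈ closedBall (0 : StrongDual ℝ Z) 1 ∧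
    f z > sSup ((fun g : StrongDual ℝ Z => g z) '' closedBall (0 : StrongDual ℝ Z) 1) - α}

/-- The norm of `Z` is `ε`-rough: every w*-slice of `B_{Z*}` has diameter at least `ε`. -/
def EpsRough (ε : ℝ) : Prop :=
  ∀ (z : Z) (α : ℝ), 0 < α → ε ≤ diam (wStarSlice Z z α)

/-- The norm of `Z` is non rough: it is not `ε`-rough for any `ε > 0`. -/
def NonRough : Prop := ∀ ε > 0, ¬ EpsRough Z ε

/-- `Z*` has the w*-Ball Dentable Property. -/
def WStarBDP : Prop :=
  ∀ ε > 0, ∃ (z : Z) (α : ℝ), 0 < α ∧ diam (wStarSlice Z z α) < ε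

/-- `V` is a (relatively) w*-open subset of the closed unit ball `B_{Z*}`. -/
def IsRelWStarOpen (V : Set (StrongDual ℝ Z)) : Prop :=
  ∃ U : Set (WeakDual ℝ Z), IsOpen U ∧
    V = {f | f ∈ closedBall (0 : StrongDual ℝ Z) 1 ∧ StrongDual.toWeakDual f ∈ U}

/-- The norm of `Z` is weakly `ε`-average rough: every nonempty relatively w*-open
subset of `B_{Z*}` has diameter at least `ε`. -/
def WeaklyEpsAvgRough (ε : ℝ) : Prop :=
  ∀ V : Set (StrongDual ℝ Z), IsRelWStarOpen Z V → V.Nonempty → ε ≤ diam V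

/-- The norm of `Z` is weakly average non rough. -/
def WeaklyAvgNonRough : Prop := ∀ ε > 0, ¬ WeaklyEpsAvgRough Z ε

/-- `Z*` has the w*-Ball Huskable Property. -/
def WStarBHP : Prop :=
  ∀ ε > 0, ∃ V : Set (StrongDual ℝ Z), IsRelWStarOpen Z V ∧ V.Nonempty ∧ diam V < ε

/-- `D` is a convex combination of w*-slices of `B_{Z*}`, i.e. `D = ∑ λᵢ Sᵢ` (Minkowski sum)
with each `Sᵢ` a w*-slice, `λᵢ > 0`, `∑ λᵢ = 1`. -/
def IsConvexCombWStarSlices (D : Set (StrongDual ℝ Z)) : Prop :=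
  ∃ (n : ℕ) (l : Fin n → ℝ) (z : Fin n → Z) (α : Fin n → ℝ),
    (∀ i, 0 < l i) ∧ (∑ i, l i) = 1 ∧ (∀ i, 0 < α i) ∧
    D = {f | ∃ g : Fin n → StrongDual ℝ Z,
      (∀ i, g i ∈ wStarSlice Z (z i) (α i)) ∧ f = ∑ i, l i • g i}

/-- The norm of `Z` is `ε`-average rough: every convex combination of w*-slices of `B_{Z*}`
has diameter at least `ε`. -/
def EpsAvgRough (ε : ℝ) : Prop :=
  ∀ D : Set (StrongDual ℝ Z), IsConvexCombWStarSlices Z D → ε ≤ diam D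

/-- The norm of `Z` is average non rough. -/
def AvgNonRough : Prop := ∀ ε > 0, ¬ EpsAvgRough Z ε

/-- `Z*` has the w*-Ball Small Combination of Slice Property. -/
def WStarBSCSP : Prop :=
  ∀ ε > 0, ∃ D : Set (StrongDual ℝ Z), IsConvexCombWStarSlices Z D ∧ diam D < ε

/-- A slice of the closed unit ball `B_Z` determined by `f ∈ Z*` and `α > 0`. -/
def ballSlice (f : StrongDual ℝ Z) (α : ℝ) : Set Z :=
  {x | x ∈ closedBall (0 : Z) 1 ∧ f x > sSup (f '' closedBall (0 : Z) 1) - α}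

/-- `Z` has the Ball Dentable Property. -/
def BDP : Prop :=
  ∀ ε > 0, ∃ (f : StrongDual ℝ Z) (α : ℝ), 0 < α ∧ diam (ballSlice Z f α) < ε

/-- `V` is a nonempty relatively weakly open subset of the closed unit ball `B_Z`. -/
def IsRelWeakOpen (V : Set Z) : Prop :=
  ∃ U : Set (WeakSpace ℝ Z), IsOpen U ∧
    V = {x | x ∈ closedBall (0 : Z) 1 ∧ toWeakSpace ℝ Z x ∈ U}

/-- `Z` has the Ball Huskable Property. -/
def BHP : Prop :=
  ∀ ε > 0, ∃ V : Set Z, IsRelWeakOpen Z V ∧ V.Nonempty ∧ diam V < ε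

/-- `D` is a convex combination of slices of `B_Z`. -/
def IsConvexCombSlices (D : Set Z) : Prop :=
  ∃ (n : ℕ) (l : Fin n → ℝ) (f : Fin n → StrongDual ℝ Z) (α : Fin n → ℝ),
    (∀ i, 0 < l i) ∧ (∑ i, l i) = 1 ∧ (∀ i, 0 < α i) ∧
    D = {x | ∃ g : Fin n → Z,
      (∀ i, g i ∈ ballSlice Z (f i) (α i)) ∧ x = ∑ i, l i • g i}

/-- `Z` has the Ball Small Combination of Slice Property. -/
def BSCSP : Prop :=
  ∀ ε > 0, ∃ D : Set Z, IsConvexCombSlices Z D ∧ diam D < ε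

variable {Z}

/-- The closed unit ball of a subspace `F` of the dual, viewed as a subset of the dual. -/
def subBall (F : Submodule ℝ (StrongDual ℝ Z)) : Set (StrongDual ℝ Z) :=
  {f | f ∈ F ∧ ‖f‖ ≤ 1}

/-- The w*-slice of `B_F` determined by `z : Z` and `α`. -/
def subWStarSlice (F : Submodule ℝ (StrongDual ℝ Z)) (z : Z) (α : ℝ) : Set (StrongDual ℝ Z) :=
  {f | f ∈ subBall F ∧ f z > sSup ((fun g : StrongDual ℝ Z => g z) '' subBall F) - α}

/-- The subspace `F` of `Z*` has the w*-Ball Dentable Property. -/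
def SubWStarBDP (F : Submodule ℝ (StrongDual ℝ Z)) : Prop :=
  ∀ ε > 0, ∃ (z : Z) (α : ℝ), 0 < α ∧ diam (subWStarSlice F z α) < ε

/-- `V` is a relatively w*-open subset of `B_F`. -/
def IsRelWStarOpenSub (F : Submodule ℝ (StrongDual ℝ Z)) (V : Set (StrongDual ℝ Z)) : Prop :=
  ∃ U : Set (WeakDual ℝ Z), IsOpen U ∧
    V = {f | f ∈ subBall F ∧ StrongDual.toWeakDual f ∈ U}

/-- The subspace `F` of `Z*` has the w*-Ball Huskable Property. -/
def SubWStarBHP (F : Submodule ℝ (StrongDual ℝ Z)) : Prop :=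
  ∀ ε > 0, ∃ V : Set (StrongDual ℝ Z), IsRelWStarOpenSub F V ∧ V.Nonempty ∧ diam V < ε

/-- `D` is a convex combination of w*-slices of `B_F`. -/
def IsConvexCombSubWStarSlices (F : Submodule ℝ (StrongDual ℝ Z)) (D : Set (StrongDual ℝ Z)) : Prop :=
  ∃ (n : ℕ) (l : Fin n → ℝ) (z : Fin n → Z) (α : Fin n → ℝ),
    (∀ i, 0 < l i) ∧ (∑ i, l i) = 1 ∧ (∀ i, 0 < α i) ∧
    D = {f | ∃ g : Fin n → StrongDual ℝ Z,
      (∀ i, g i ∈ subWStarSlice F (z i) (α i)) ∧ f = ∑ i, l i • g i}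

/-- The subspace `F` of `Z*` has the w*-Ball Small Combination of Slice Property. -/
def SubWStarBSCSP (F : Submodule ℝ (StrongDual ℝ Z)) : Prop :=
  ∀ ε > 0, ∃ D : Set (StrongDual ℝ Z), IsConvexCombSubWStarSlices F D ∧ diam D < ε

/-- The annihilator `Y^⊥ = {f ∈ Z* : f(y) = 0 for all y ∈ Y}` of a subspace `Y` of `Z`. -/
noncomputable def annih (Y : Submodule ℝ Z) : Submodule ℝ (StrongDual ℝ Z) where
  carrier := {f | ∀ y ∈ Y, f y = 0}
  add_mem' := by intro f g hf hg y hy; simp [hf y hy, hg y hy]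
  zero_mem' := by intro y hy; simp
  smul_mem' := by intro c f hf y hy; simp [hf y hy]

end Defs


section Aux
variable {Z : Type*} [NormedAddCommGroup Z] [NormedSpace ℝ Z]

lemma opNorm_le_of_unitBall (g : StrongDual ℝ Z) {M : ℝ} (hM : 0 ≤ M)
    (hb : ∀ x ∈ closedBall (0:Z) 1, g x ≤ M) : ‖g‖ ≤ M := by
  refine ContinuousLinearMap.opNorm_le_bound g hM fun x => ?_
  rcases eq_or_ne x 0 with rfl | hx
  · simp
  · have hxn : 0 < ‖x‖ := norm_pos_iff.mpr hx
    set u := ‖x‖⁻¹ • x with hu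
    have hu1 : u ∈ closedBall (0:Z) 1 := by
      simp [hu, mem_closedBall_zero_iff, norm_smul, abs_of_nonneg (inv_nonneg.mpr hxn.le),
        inv_mul_cancel₀ hxn.ne']
    have h1 : g u ≤ M := hb u hu1
    have h2 : -(g u) ≤ M := by
      have := hb (-u) (by simpa using hu1)
      simpa using this
    have habs : ‖g u‖ ≤ M := by
      rw [Real.norm_eq_abs, abs_le]; constructor <;> linarith
    have hgx : g x = ‖x‖ * g u := by
      rw [hu, map_smul]
      rw [smul_eq_mul, ← mul_assoc, mul_inv_cancel₀ hxn.ne', one_mul]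
    rw [hgx]
    rw [norm_mul, Real.norm_eq_abs (‖x‖), abs_of_nonneg hxn.le, mul_comm]
    exact mul_le_mul_of_nonneg_right habs hxn.le

lemma sSup_image_unitBall (f : StrongDual ℝ Z) : sSup (⇑f '' closedBall (0:Z) 1) = ‖f‖ := by
  have hbdd : ∀ y ∈ ⇑f '' closedBall (0:Z) 1, y ≤ ‖f‖ := by
    rintro y ⟨x, hx, rfl⟩
    calc f x ≤ ‖f x‖ := le_abs_self _
    _ ≤ ‖f‖ * ‖x‖ := f.le_opNorm x
    _ ≤ ‖f‖ * 1 := by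
        exact mul_le_mul_of_nonneg_left (mem_closedBall_zero_iff.mp hx) (norm_nonneg f)
    _ = ‖f‖ := mul_one _
  have hBdd : BddAbove (⇑f '' closedBall (0:Z) 1) := ⟨‖f‖, hbdd⟩
  have h0 : (0:ℝ) ∈ ⇑f '' closedBall (0:Z) 1 := ⟨0, by simp, by simp⟩
  refine le_antisymm (Real.sSup_le hbdd (norm_nonneg f)) ?_
  exact opNorm_le_of_unitBall f (le_csSup hBdd h0) (fun x hx => le_csSup hBdd ⟨x, hx, rfl⟩)

lemma sSup_eval_unitBall (z : Z) :
    sSup ((fun g : StrongDual ℝ Z => g z) '' closedBall (0 : StrongDual ℝ Z) 1) = ‖z‖ := by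
  have he : (fun g : StrongDual ℝ Z => g z) = ⇑(inclusionInDoubleDual ℝ Z z) := rfl
  rw [he, sSup_image_unitBall]
  exact (inclusionInDoubleDualLi (𝕜 := ℝ) (E := Z)).norm_map z

end Aux


section Gold
variable {X : Type*} [NormedAddCommGroup X] [NormedSpace ℝ X]

lemma goldstine_fin (F : StrongDual ℝ (StrongDual ℝ X)) (hF : ‖F‖ ≤ 1)
    {m : ℕ} (h : Fin m → StrongDual ℝ X) {δ : ℝ} (hδ : 0 < δ) :
    ∃ x ∈ closedBall (0:X) 1, ∀ j, |F (h j) - (h j) x| < δ := by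
  classical
  set L : X →ₗ[ℝ] (Fin m → ℝ) := LinearMap.pi (fun j => (h j).toLinearMap) with hL
  set S : Set (Fin m → ℝ) := L '' closedBall (0:X) 1 with hS
  set c : Fin m → ℝ := fun j => F (h j) with hc
  have hSconv : Convex ℝ S := (convex_closedBall (0:X) 1).linear_image L
  have hcmem : c ∈ closure S := by
    by_contra hcn
    obtain ⟨φ, u, hsep, hu⟩ :=
      geometric_hahn_banach_closed_point (hSconv.closure) isClosed_closure hcn
    set a : Fin m → ℝ := fun j => φ ((Pi.single j 1 : Fin m → ℝ)) with ha
    have hφ : ∀ b : Fin m → ℝ, φ b = ∑ j, b j * a j := by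
      intro b
      have hb : b = ∑ j, b j • (Pi.single j 1 : Fin m → ℝ) := by
        ext k
        simp [Finset.sum_apply, Pi.single_apply]
      conv_lhs => rw [hb]
      rw [map_sum]
      simp [ha, smul_eq_mul]
    set g : StrongDual ℝ X := ∑ j, a j • h j with hg
    have hgapp : ∀ x : X, g x = ∑ j, a j * (h j) x := by
      intro x
      simp [hg, ContinuousLinearMap.sum_apply]
    have hu0 : 0 < u := by
      have h0S : (0 : Fin m → ℝ) ∈ closure S := by
        apply subset_closure
        exact ⟨0, by simp, by simp [hL]⟩
      simpa using hsep 0 h0S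
    have hgu : ∀ x ∈ closedBall (0:X) 1, g x ≤ u := by
      intro x hx
      have := hsep (L x) (subset_closure ⟨x, hx, rfl⟩)
      rw [hφ] at this
      rw [hgapp]
      refine le_of_lt ?_
      calc ∑ j, a j * (h j) x = ∑ j, (L x) j * a j := by
            apply Finset.sum_congr rfl; intro j _; rw [mul_comm]; rfl
      _ < u := this
    have hgnorm : ‖g‖ ≤ u := opNorm_le_of_unitBall g hu0.le hgu
    have hFg : φ c = F g := by
      rw [hφ, hg, map_sum]
      apply Finset.sum_congr rfl
      intro j _
      rw [map_smul]
      simp [hc, mul_comm]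
    have : φ c ≤ u := by
      rw [hFg]
      calc F g ≤ ‖F g‖ := le_abs_self _
      _ ≤ ‖F‖ * ‖g‖ := F.le_opNorm g
      _ ≤ 1 * u := by
          exact mul_le_mul hF hgnorm (norm_nonneg g) zero_le_one
      _ = u := one_mul u
    linarith
  rw [Metric.mem_closure_iff] at hcmem
  obtain ⟨b, ⟨x, hx, rfl⟩, hdist⟩ := hcmem δ hδ
  refine ⟨x, hx, fun j => ?_⟩
  have := dist_le_pi_dist c (L x) j
  have : dist (c j) (L x j) < δ := lt_of_le_of_lt this hdist
  rw [Real.dist_eq] at this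
  exact this

end Gold

section Main

variable {X : Type*} [NormedAddCommGroup X] [NormedSpace ℝ X]

lemma comb_norm_le {W : Type*} [NormedAddCommGroup W] [NormedSpace ℝ W] {n : ℕ}
    {l : Fin n → ℝ} (hl : ∀ i, 0 ≤ l i) (hsum : (∑ i, l i) = 1)
    {g : Fin n → W} (hg : ∀ i, ‖g i‖ ≤ 1) : ‖∑ i, l i • g i‖ ≤ 1 := by
  calc ‖∑ i, l i • g i‖ ≤ ∑ i, ‖l i • g i‖ := norm_sum_le _ _
  _ ≤ ∑ i, l i := by
      refine Finset.sum_le_sum fun i _ => ?_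
      rw [norm_smul, Real.norm_eq_abs, abs_of_nonneg (hl i)]
      calc l i * ‖g i‖ ≤ l i * 1 := mul_le_mul_of_nonneg_left (hg i) (hl i)
      _ = l i := mul_one _
  _ = 1 := hsum

lemma approx_comb (h : StrongDual ℝ X) {n : ℕ} {l : Fin n → ℝ} {f : Fin n → StrongDual ℝ X}
    {α : Fin n → ℝ} (hl : ∀ i, 0 < l i) (hsum : (∑ i, l i) = 1) (hα : ∀ i, 0 < α i)
    (Fg : Fin n → StrongDual ℝ (StrongDual ℝ X))
    (hFg : ∀ i, Fg i ∈ wStarSlice (StrongDual ℝ X) (f i) (α i)) {δ : ℝ} (hδ : 0 < δ) :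
    ∃ x : X, (∃ g : Fin n → X, (∀ i, g i ∈ ballSlice X (f i) (α i)) ∧ x = ∑ i, l i • g i) ∧
      |(∑ i, l i • Fg i) h - h x| ≤ δ := by
  have key : ∀ i, ∃ x : X, x ∈ ballSlice X (f i) (α i) ∧ |Fg i h - h x| < δ := by
    intro i
    obtain ⟨hFB, hFs⟩ := hFg i
    rw [sSup_eval_unitBall (f i)] at hFs
    have hFn : ‖Fg i‖ ≤ 1 := mem_closedBall_zero_iff.mp hFB
    set δi : ℝ := min δ (Fg i (f i) - (‖f i‖ - α i)) with hδi
    have hδipos : 0 < δi := lt_min hδ (by linarith)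
    obtain ⟨x, hxB, hxj⟩ := goldstine_fin (Fg i) hFn (![f i, h]) hδipos
    have h0 := hxj 0
    have h1 := hxj 1
    simp only [Matrix.cons_val_zero, Matrix.cons_val_one, Matrix.head_cons] at h0 h1
    refine ⟨x, ⟨hxB, ?_⟩, lt_of_lt_of_le h1 (min_le_left _ _)⟩
    rw [sSup_image_unitBall (f i)]
    have : Fg i (f i) - (f i) x < δi := lt_of_le_of_lt (le_abs_self _) h0
    have h2 : δi ≤ Fg i (f i) - (‖f i‖ - α i) := min_le_right _ _
    linarith
  choose xs hxs hxd using key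
  refine ⟨∑ i, l i • xs i, ⟨xs, hxs, rfl⟩, ?_⟩
  have hFh : (∑ i, l i • Fg i) h = ∑ i, l i * Fg i h := by
    simp [ContinuousLinearMap.sum_apply]
  have hhx : h (∑ i, l i • xs i) = ∑ i, l i * h (xs i) := by
    rw [map_sum]; simp
  rw [hFh, hhx, ← Finset.sum_sub_distrib]
  calc |∑ i, (l i * Fg i h - l i * h (xs i))| ≤ ∑ i, |l i * Fg i h - l i * h (xs i)| :=
        Finset.abs_sum_le_sum_abs _ _
  _ ≤ ∑ i, l i * δ := by
      refine Finset.sum_le_sum fun i _ => ?_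
      rw [← mul_sub, abs_mul, abs_of_nonneg (hl i).le]
      exact mul_le_mul_of_nonneg_left (hxd i).le (hl i).le
  _ = δ := by rw [← Finset.sum_mul, hsum, one_mul]

end Main

/-- The norm of `X*` is average non rough if and only if `X` has the Ball Small
Combination of Slice Property. -/
theorem statement_5 (X : Type*) [NormedAddCommGroup X] [NormedSpace ℝ X] [CompleteSpace X] :
    AvgNonRough (StrongDual ℝ X) ↔ BSCSP X := by
  constructor
  · -- average non rough → BSCSP
    intro hAN ε hε
    have h1 := hAN ε hε
    unfold EpsAvgRough at h1
    push_neg at h1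
    obtain ⟨D, ⟨n, l, z, α, hl, hsum, hα, hDeq⟩, hdiam⟩ := h1
    refine ⟨{x : X | ∃ g : Fin n → X, (∀ i, g i ∈ ballSlice X (z i) (α i)) ∧
      x = ∑ i, l i • g i}, ⟨n, l, z, α, hl, hsum, hα, rfl⟩, ?_⟩
    -- the corresponding combination of slices of B_X is small
    have hDsub : D ⊆ closedBall (0 : StrongDual ℝ (StrongDual ℝ X)) 1 := by
      rw [hDeq]
      rintro F ⟨g, hg, rfl⟩
      exact mem_closedBall_zero_iff.mpr
        (comb_norm_le (fun i => (hl i).le) hsum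
          (fun i => mem_closedBall_zero_iff.mp (hg i).1))
    have hDbdd : Bornology.IsBounded D := (isBounded_closedBall).subset hDsub
    refine lt_of_le_of_lt ?_ hdiam
    refine diam_le_of_forall_dist_le Metric.diam_nonneg ?_
    rintro x ⟨gx, hgx, rfl⟩ y ⟨gy, hgy, rfl⟩
    set J := inclusionInDoubleDualLi (𝕜 := ℝ) (E := X) with hJ
    have hmap : ∀ {g : Fin n → X}, (∀ i, g i ∈ ballSlice X (z i) (α i)) →
        (∑ i, l i • (J (g i))) ∈ D := by
      intro g hg
      rw [hDeq]
      refine ⟨fun i => J (g i), fun i => ?_, rfl⟩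
      obtain ⟨hgB, hgs⟩ := hg i
      constructor
      · rw [mem_closedBall_zero_iff, J.norm_map]
        exact mem_closedBall_zero_iff.mp hgB
      · rw [sSup_eval_unitBall (z i)]
        rw [sSup_image_unitBall (z i)] at hgs
        exact hgs
    have hx : J (∑ i, l i • gx i) = ∑ i, l i • (J (gx i)) := by
      rw [← LinearIsometry.coe_toLinearMap, map_sum]; simp
    have hy : J (∑ i, l i • gy i) = ∑ i, l i • (J (gy i)) := by
      rw [← LinearIsometry.coe_toLinearMap, map_sum]; simp
    calc dist (∑ i, l i • gx i) (∑ i, l i • gy i)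
        = dist (J (∑ i, l i • gx i)) (J (∑ i, l i • gy i)) := (J.dist_map _ _).symm
    _ ≤ diam D := by
        rw [hx, hy]
        exact dist_le_diam_of_mem hDbdd (hmap hgx) (hmap hgy)
  · -- BSCSP → average non rough
    intro hB ε hε
    obtain ⟨DX, ⟨n, l, f, α, hl, hsum, hα, hDXeq⟩, hdiam⟩ := hB ε hε
    intro hrough
    have hD : IsConvexCombWStarSlices (StrongDual ℝ X)
        {F : StrongDual ℝ (StrongDual ℝ X) | ∃ g : Fin n → StrongDual ℝ (StrongDual ℝ X),
          (∀ i, g i ∈ wStarSlice (StrongDual ℝ X) (f i) (α i)) ∧ F = ∑ i, l i • g i} :=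
      ⟨n, l, f, α, hl, hsum, hα, rfl⟩
    have hge := hrough _ hD
    -- show the diameter of this combination is at most diam DX
    have hDXsub : DX ⊆ closedBall (0 : X) 1 := by
      rw [hDXeq]
      rintro x ⟨g, hg, rfl⟩
      exact mem_closedBall_zero_iff.mpr
        (comb_norm_le (fun i => (hl i).le) hsum
          (fun i => mem_closedBall_zero_iff.mp (hg i).1))
    have hDXbdd : Bornology.IsBounded DX := (isBounded_closedBall).subset hDXsub
    have hkey : diam {F : StrongDual ℝ (StrongDual ℝ X) | ∃ g : Fin n → StrongDual ℝ (StrongDual ℝ X),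
        (∀ i, g i ∈ wStarSlice (StrongDual ℝ X) (f i) (α i)) ∧ F = ∑ i, l i • g i} ≤ diam DX := by
      refine diam_le_of_forall_dist_le Metric.diam_nonneg ?_
      rintro F ⟨Fg, hFg, rfl⟩ G ⟨Gg, hGg, rfl⟩
      rw [dist_eq_norm (E := StrongDual ℝ (StrongDual ℝ X))]
      refine le_of_forall_pos_le_add fun δ hδ => ?_
      set δ' := δ / 3 with hδ'def
      have hδ' : 0 < δ' := by positivity
      -- pick a norming functional h
      set FG := (∑ i, l i • Fg i) - (∑ i, l i • Gg i) with hFG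
      have hne : (⇑FG '' closedBall (0 : StrongDual ℝ X) 1).Nonempty :=
        ⟨FG 0, 0, by simp, rfl⟩
      have hlt : ‖FG‖ - δ' < sSup (⇑FG '' closedBall (0 : StrongDual ℝ X) 1) := by
        rw [sSup_image_unitBall]; linarith
      obtain ⟨yv, ⟨h, hhB, rfl⟩, hyv⟩ := exists_lt_of_lt_csSup hne hlt
      have hhn : ‖h‖ ≤ 1 := mem_closedBall_zero_iff.mp hhB
      obtain ⟨xx, hxxD, hxxa⟩ := approx_comb h hl hsum hα Fg hFg hδ'
      obtain ⟨yy, hyyD, hyya⟩ := approx_comb h hl hsum hα Gg hGg hδ'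
      have hxxm : xx ∈ DX := by rw [hDXeq]; exact hxxD
      have hyym : yy ∈ DX := by rw [hDXeq]; exact hyyD
      have hdistle : h xx - h yy ≤ diam DX := by
        have : h xx - h yy = h (xx - yy) := by rw [map_sub]
        rw [this]
        calc h (xx - yy) ≤ ‖h (xx - yy)‖ := le_abs_self _
        _ ≤ ‖h‖ * ‖xx - yy‖ := h.le_opNorm _
        _ ≤ 1 * ‖xx - yy‖ := mul_le_mul_of_nonneg_right hhn (norm_nonneg _)
        _ = dist xx yy := by rw [one_mul, dist_eq_norm]
        _ ≤ diam DX := dist_le_diam_of_mem hDXbdd hxxm hyym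
      have hFGh : FG h = (∑ i, l i • Fg i) h - (∑ i, l i • Gg i) h := by
        rw [hFG]; simp
      have habs1 : (∑ i, l i • Fg i) h - h xx ≤ δ' := le_of_abs_le hxxa
      have habs2 : h yy - (∑ i, l i • Gg i) h ≤ δ' := by
        have h' : |h yy - (∑ i, l i • Gg i) h| ≤ δ' := by
          rw [abs_sub_comm]; exact hyya
        exact le_of_abs_le h'
      have : ‖FG‖ - δ' < FG h := hyv
      rw [hFGh] at this
      have hfinal : ‖FG‖ < diam DX + 3 * δ' := by linarith
      rw [hδ'def] at hfinal
      linarith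
    linarith [lt_of_le_of_lt hkey hdiam]
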